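/- Let μ be a Borel probability measure on ℝ with μ((-∞,0)) = 0, with finite mean m = ∫ x dμ(x), and let θ > 0 satisfy F(θ) = μ((-∞,θ]) > 0 and μ((θ,∞)) > 0. If ( ∫_{(θ,∞)} (x − θ) dμ(x) ) / μ((θ,∞)) > m, then ( 2·∫_{[0,θ]} x dμ(x) + θ·μ((θ,∞)) ) / F(θ) < 2m. -/

import Mathlib

open MeasureTheory

/-- For a service-time distribution `μ` (Borel probability measure on `ℝ` with
`μ((-∞,0)) = 0`) with finite mean `m`, and `θ > 0` with `F(θ) = μ((-∞,θ]) > 0` and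
`μ((θ,∞)) > 0`: if the conditional mean residual `E[X - θ | X > θ]` exceeds the mean `m`, then
preemption with threshold `θ` strictly beats the zero-wait policy:
`(2 ∫_{[0,θ]} x dμ + θ μ((θ,∞))) / F(θ) < 2 m`. -/
theorem stmt_10
    (μ : Measure ℝ) [IsProbabilityMeasure μ] (hnonneg : μ (Set.Iio 0) = 0)
    (hint : Integrable (fun x : ℝ => x) μ)
    (m : ℝ) (hm : m = ∫ x, x ∂μ)
    (θ : ℝ) (hθ : 0 < θ)
    (hF : 0 < (μ (Set.Iic θ)).toReal) (hT : 0 < (μ (Set.Ioi θ)).toReal)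
    (hres : (∫ x in Set.Ioi θ, (x - θ) ∂μ) / (μ (Set.Ioi θ)).toReal > m) :
    (2 * ∫ x in Set.Icc 0 θ, x ∂μ + θ * (μ (Set.Ioi θ)).toReal) / (μ (Set.Iic θ)).toReal
      < 2 * m := by
  set F : ℝ := (μ (Set.Iic θ)).toReal with hFdef
  set T : ℝ := (μ (Set.Ioi θ)).toReal with hTdef
  set A : ℝ := ∫ x in Set.Iic θ, x ∂μ with hAdef
  set B : ℝ := ∫ x in Set.Ioi θ, x ∂μ with hBdef
  -- Icc 0 θ =ᵐ Iic θ
  have hsets : Set.Icc 0 θ =ᵐ[μ] Set.Iic θ := by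
    rw [Filter.eventuallyEq_set]
    have : ∀ᵐ x ∂μ, x ∉ Set.Iio 0 := by
      rw [ae_iff]
      simp only [not_not, Set.setOf_mem_eq]; exact hnonneg
    filter_upwards [this] with x hx
    simp only [Set.mem_Icc, Set.mem_Iic, Set.mem_Iio, not_lt] at *
    constructor
    · exact fun h => h.2
    · exact fun h => ⟨hx, h⟩
  have hIcc : ∫ x in Set.Icc 0 θ, x ∂μ = A := setIntegral_congr_set hsets
  -- split mean
  have hsplit : m = A + B := by
    rw [hm]
    have := integral_add_compl (measurableSet_Iic (a := θ)) hint
    rw [Set.compl_Iic] at this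
    exact this.symm
  -- F + T = 1
  have hFT : F + T = 1 := by
    have h1 : μ (Set.Iic θ) + μ (Set.Ioi θ) = 1 := by
      rw [← measure_union (Set.Iic_disjoint_Ioi le_rfl) measurableSet_Ioi,
        Set.Iic_union_Ioi, measure_univ]
    have hfin : μ (Set.Iic θ) ≠ ⊤ := measure_ne_top μ _
    have hfin' : μ (Set.Ioi θ) ≠ ⊤ := measure_ne_top μ _
    rw [hFdef, hTdef, ← ENNReal.toReal_add hfin hfin', h1, ENNReal.toReal_one]
  -- residual integral
  have hres' : B - θ * T > m * T := by
    have hTpos := hT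
    have hint' : Integrable (fun x : ℝ => x) (μ.restrict (Set.Ioi θ)) :=
      hint.restrict
    have hconst : Integrable (fun _ : ℝ => θ) (μ.restrict (Set.Ioi θ)) :=
      integrable_const θ
    have hsub : (∫ x in Set.Ioi θ, (x - θ) ∂μ) = B - θ * T := by
      rw [integral_sub hint' hconst, integral_const]
      simp [hBdef, hTdef, mul_comm, Measure.restrict_apply_univ, Measure.real]
    rw [hsub, gt_iff_lt, lt_div_iff₀ hTpos] at hres
    linarith
  -- conclude
  rw [hIcc, div_lt_iff₀ hF]
  have hmm : m * F + m * T = m := by rw [← mul_add, hFT, mul_one]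
  have hθT : 0 < θ * T := mul_pos hθ hT
  linarith
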